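/- Let X and Y be regular topological spaces, α a hereditarily closed compact network on X closed under finite unions. Then for every f ∈ C_α(X,Y): ψ(f, C_α(X,Y)) ≤ wαc(X) · psw_e(f(X), Y). -/

import Mathlib

open Set Cardinal TopologicalSpace

namespace PsiAux

universe u
variable {Z : Type u}

noncomputable local instance : DecidableEq (Set Z) := Classical.decEq _

/-- Finite irreducible covers of `S` by members of `𝒱`. -/
def Irred (𝒱 : Set (Set Z)) (S : Set Z) : Set (Finset (Set Z)) :=
  {F | ↑F ⊆ 𝒱 ∧ S ⊆ ⋃₀ ↑F ∧ ∀ V ∈ F, ¬ S ⊆ ⋃₀ ↑(F.erase V)}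

lemma prune (𝒱 : Set (Set Z)) (S : Set Z) :
    ∀ F : Finset (Set Z), ↑F ⊆ 𝒱 → S ⊆ ⋃₀ ↑F → ∃ F' ∈ Irred 𝒱 S, F' ⊆ F := by
  classical
  intro F
  induction F using Finset.strongInductionOn with
  | _ F ih =>
    intro hsub hcov
    by_cases h : ∀ V ∈ F, ¬ S ⊆ ⋃₀ ↑(F.erase V)
    · exact ⟨F, ⟨hsub, hcov, h⟩, Finset.Subset.refl F⟩
    · push_neg at h
      obtain ⟨V, hV, hcov'⟩ := h
      obtain ⟨F', hF', hsub'⟩ := ih (F.erase V) (Finset.erase_ssubset hV)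
        (fun W hW => hsub (Finset.erase_subset _ _ hW)) hcov'
      exact ⟨F', hF', hsub'.trans (Finset.erase_subset _ _)⟩

lemma erase_mem_irred {𝒱 : Set (Set Z)} {S : Set Z} {F : Finset (Set Z)}
    (hF : F ∈ Irred 𝒱 S) {V : Set Z} (hV : V ∈ F) :
    F.erase V ∈ Irred 𝒱 (S \ V) := by
  classical
  obtain ⟨hsub, hcov, hirr⟩ := hF
  refine ⟨fun W hW => hsub (Finset.erase_subset _ _ hW), ?_, ?_⟩
  · rintro s ⟨hsS, hsV⟩
    obtain ⟨W, hWF, hsW⟩ := hcov hsS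
    refine ⟨W, ?_, hsW⟩
    have hWF' : W ∈ F := hWF
    exact Finset.mem_coe.mpr (Finset.mem_erase.mpr ⟨by rintro rfl; exact hsV hsW, hWF'⟩)
  · intro V' hV' hconc
    have hV'F : V' ∈ F := Finset.mem_of_mem_erase hV'
    have hVne : V ≠ V' := fun h => (Finset.mem_erase.mp hV').1 h.symm
    obtain ⟨s, hsS, hs⟩ := not_subset.mp (hirr V' hV'F)
    have hsV : s ∉ V := fun h =>
      hs ⟨V, Finset.mem_coe.mpr (Finset.mem_erase.mpr ⟨hVne, hV⟩), h⟩
    obtain ⟨W, hW, hsW⟩ := hconc ⟨hsS, hsV⟩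
    have hW' : W ∈ (F.erase V).erase V' := hW
    have h1 := Finset.mem_erase.mp hW'
    have h2 := Finset.mem_erase.mp h1.2
    exact hs ⟨W, Finset.mem_coe.mpr (Finset.mem_erase.mpr ⟨h1.1, h2.2⟩), hsW⟩


lemma mish_n (𝒱 : Set (Set Z)) (T : Set Z) (κ : Cardinal.{u}) (hκ : ℵ₀ ≤ κ)
    (H : ∀ y ∈ T, #{V : Set Z // V ∈ 𝒱 ∧ y ∈ V} ≤ κ) :
    ∀ n : ℕ, ∀ S : Set Z, S ⊆ T →
      #{F : Finset (Set Z) // F ∈ Irred 𝒱 S ∧ F.card = n} ≤ κ := by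
  classical
  intro n
  induction n with
  | zero =>
    intro S hST
    have hsub : Subsingleton {F : Finset (Set Z) // F ∈ Irred 𝒱 S ∧ F.card = 0} := by
      constructor
      rintro ⟨F, _, hF⟩ ⟨G, _, hG⟩
      simp only [Finset.card_eq_zero] at hF hG
      subst hF; subst hG; rfl
    exact le_trans (Cardinal.le_one_iff_subsingleton.mpr hsub)
      (le_trans Cardinal.one_lt_aleph0.le hκ)
  | succ n ih =>
    intro S hST
    by_cases hS : S.Nonempty
    · obtain ⟨s₀, hs₀⟩ := hS
      have key : ∀ F : {F : Finset (Set Z) // F ∈ Irred 𝒱 S ∧ F.card = n + 1},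
          ∃ V : Set Z, V ∈ F.1 ∧ V ∈ 𝒱 ∧ s₀ ∈ V := by
        rintro ⟨F, ⟨hsub, hcov, _⟩, _⟩
        obtain ⟨V, hVF, hsV⟩ := hcov hs₀
        exact ⟨V, hVF, hsub hVF, hsV⟩
      choose v hvF hv𝒱 hvs using key
      let Φ : {F : Finset (Set Z) // F ∈ Irred 𝒱 S ∧ F.card = n + 1} →
          Σ V : {V : Set Z // V ∈ 𝒱 ∧ s₀ ∈ V},
            {F : Finset (Set Z) // F ∈ Irred 𝒱 (S \ V.1) ∧ F.card = n} := fun F =>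
        ⟨⟨v F, hv𝒱 F, hvs F⟩, ⟨F.1.erase (v F), erase_mem_irred F.2.1 (hvF F),
          by simp [Finset.card_erase_of_mem (hvF F), F.2.2]⟩⟩
      have hinj : Function.Injective Φ := by
        intro F G h
        have h1 : v F = v G := congrArg (fun p => p.1.1) h
        have h2 : F.1.erase (v F) = G.1.erase (v G) := congrArg (fun p => p.2.1) h
        apply Subtype.ext
        rw [← Finset.insert_erase (hvF F), h2, h1, Finset.insert_erase (hvF G)]
      calc #{F : Finset (Set Z) // F ∈ Irred 𝒱 S ∧ F.card = n + 1}
          ≤ #(Σ V : {V : Set Z // V ∈ 𝒱 ∧ s₀ ∈ V},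
              {F : Finset (Set Z) // F ∈ Irred 𝒱 (S \ V.1) ∧ F.card = n}) :=
            Cardinal.mk_le_of_injective hinj
        _ = Cardinal.sum (fun V : {V : Set Z // V ∈ 𝒱 ∧ s₀ ∈ V} =>
              #{F : Finset (Set Z) // F ∈ Irred 𝒱 (S \ V.1) ∧ F.card = n}) :=
            Cardinal.mk_sigma _
        _ ≤ Cardinal.sum (fun _ : {V : Set Z // V ∈ 𝒱 ∧ s₀ ∈ V} => κ) :=
            Cardinal.sum_le_sum _ _ (fun V => ih (S \ V.1) ((diff_subset).trans hST))
        _ = #{V : Set Z // V ∈ 𝒱 ∧ s₀ ∈ V} * κ := Cardinal.sum_const' _ _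
        _ ≤ κ * κ := mul_le_mul' (H s₀ (hST hs₀)) le_rfl
        _ = κ := Cardinal.mul_eq_self hκ
    · rw [not_nonempty_iff_eq_empty] at hS
      subst hS
      have : IsEmpty {F : Finset (Set Z) // F ∈ Irred 𝒱 (∅ : Set Z) ∧ F.card = n + 1} := by
        constructor
        rintro ⟨F, ⟨_, _, hirr⟩, hcard⟩
        obtain ⟨V, hV⟩ := Finset.card_pos.mp (by omega : 0 < F.card)
        exact hirr V hV (empty_subset _)
      simp only [Cardinal.mk_eq_zero]; exact zero_le

lemma mish (𝒱 : Set (Set Z)) {T : Set Z} {κ : Cardinal.{u}} (hκ : ℵ₀ ≤ κ)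
    (H : ∀ y ∈ T, #{V : Set Z // V ∈ 𝒱 ∧ y ∈ V} ≤ κ)
    {S : Set Z} (hST : S ⊆ T) :
    #{F : Finset (Set Z) // F ∈ Irred 𝒱 S} ≤ κ := by
  classical
  let Φ : {F : Finset (Set Z) // F ∈ Irred 𝒱 S} →
      Σ n : ULift.{u} ℕ, {F : Finset (Set Z) // F ∈ Irred 𝒱 S ∧ F.card = n.down} :=
    fun F => ⟨⟨F.1.card⟩, ⟨F.1, F.2, rfl⟩⟩
  have hinj : Function.Injective Φ := by
    intro F G h
    exact Subtype.ext (congrArg (fun p => p.2.1) h)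
  calc #{F : Finset (Set Z) // F ∈ Irred 𝒱 S}
      ≤ #(Σ n : ULift.{u} ℕ, {F : Finset (Set Z) // F ∈ Irred 𝒱 S ∧ F.card = n.down}) :=
        Cardinal.mk_le_of_injective hinj
    _ = Cardinal.sum (fun n : ULift.{u} ℕ =>
          #{F : Finset (Set Z) // F ∈ Irred 𝒱 S ∧ F.card = n.down}) := Cardinal.mk_sigma _
    _ ≤ Cardinal.sum (fun _ : ULift.{u} ℕ => κ) :=
        Cardinal.sum_le_sum _ _ (fun n => mish_n 𝒱 T κ hκ H n.down S hST)
    _ = #(ULift.{u} ℕ) * κ := Cardinal.sum_const' _ _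
    _ ≤ κ * κ := mul_le_mul' (by simpa using hκ) le_rfl
    _ = κ := Cardinal.mul_eq_self hκ

end PsiAux

/-- **Theorem 2.6.** For regular `X`, `Y`, a hereditarily closed compact network `α` on `X`
closed under finite unions, and the set-open topology on `C(X,Y)`: for every continuous
`f : X → Y`, `ψ(f, C_α(X,Y)) ≤ wαc(X) · psw_e(f(X), Y)`, stated via arbitrary upper
bounds `κ₁` for `wαc(X)` and `κ₂` for `psw_e(f(X), Y)`. -/

theorem psi_Calpha_le_wac_mul_pswe
    {X Y : Type u} [TopologicalSpace X] [TopologicalSpace Y] [T3Space X] [T3Space Y]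
    (α : Set (Set X))
    (hnet : ∀ x : X, ∀ U : Set X, IsOpen U → x ∈ U → ∃ A ∈ α, x ∈ A ∧ A ⊆ U)
    (hcpt : ∀ A ∈ α, IsCompact A)
    (hher : ∀ A ∈ α, ∀ B ⊆ A, IsClosed B → B ∈ α)
    (hun : ∀ A ∈ α, ∀ B ∈ α, A ∪ B ∈ α)
    (κ₁ κ₂ : Cardinal) (hκ₁ : ℵ₀ ≤ κ₁) (hκ₂ : ℵ₀ ≤ κ₂)
    -- wαc(X) ≤ κ₁
    (hwac : ∃ β ⊆ α, #β ≤ κ₁ ∧ Dense (⋃₀ β))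
    (f : C(X, Y))
    -- psw_e(f(X), Y) ≤ κ₂
    (hpswe : ∃ 𝒱 : Set (Set Y), (∀ V ∈ 𝒱, IsOpen V) ∧
      ∀ y ∈ range f, #{V : Set Y // V ∈ 𝒱 ∧ y ∈ V} ≤ κ₂ ∧
        ⋂₀ {V ∈ 𝒱 | y ∈ V} = {y}) :
    -- conclusion: ψ(f, C_α(X,Y)) ≤ κ₁ · κ₂
    letI T : TopologicalSpace C(X, Y) := TopologicalSpace.generateFrom
      {S : Set C(X, Y) | ∃ A ∈ α, ∃ V : Set Y, IsOpen V ∧ S = {g : C(X, Y) | g '' A ⊆ V}}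
    ∃ 𝒲 : Set (Set C(X, Y)), (∀ W ∈ 𝒲, T.IsOpen W) ∧ #𝒲 ≤ κ₁ * κ₂ ∧
      ⋂₀ 𝒲 = {f} := by
  classical
  obtain ⟨β, hβα, hβcard, hβdense⟩ := hwac
  obtain ⟨𝒱, h𝒱open, h𝒱⟩ := hpswe
  let I : Type u := Σ A₀ : β,
    Σ F : {F : Finset (Set Y) // F ∈ PsiAux.Irred 𝒱 (f '' (A₀ : Set X))},
      {V : Set Y // V ∈ F.1}
  let core : I → Set X := fun i =>
    (i.1 : Set X) ∩ f ⁻¹' (f '' (i.1 : Set X) \ ⋃₀ ↑(i.2.1.1.erase i.2.2.1))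
  let φ : I → Set C(X, Y) := fun i => {g : C(X, Y) | g '' core i ⊆ i.2.2.1}
  have hAmem : ∀ i : I, core i ∈ α := by
    intro i
    have hA₀ : (i.1 : Set X) ∈ α := hβα i.1.2
    have hA₀cpt : IsCompact (i.1 : Set X) := hcpt _ hA₀
    have himg : IsClosed (f '' (i.1 : Set X)) := (hA₀cpt.image f.continuous).isClosed
    have hop : IsOpen (⋃₀ ((i.2.1.1.erase i.2.2.1 : Finset (Set Y)) : Set (Set Y))) := by
      apply isOpen_sUnion
      intro W hW
      exact h𝒱open W (i.2.1.2.1 (Finset.erase_subset _ _ hW))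
    exact hher _ hA₀ _ inter_subset_left
      (hA₀cpt.isClosed.inter ((himg.sdiff hop).preimage f.continuous))
  have hcore_img : ∀ i : I, f '' core i ⊆ i.2.2.1 := by
    intro i
    rintro _ ⟨x, ⟨hxA, hx1, hx2⟩, rfl⟩
    obtain ⟨W, hWF, hxW⟩ := i.2.1.2.2.1 hx1
    by_cases hWV : W = i.2.2.1
    · exact hWV ▸ hxW
    · exact absurd ⟨W, Finset.mem_coe.mpr (Finset.mem_erase.mpr ⟨hWV, hWF⟩), hxW⟩ hx2
  have hinner : ∀ A₀ : β,
      #(Σ F : {F : Finset (Set Y) // F ∈ PsiAux.Irred 𝒱 (f '' (A₀ : Set X))},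
        {V : Set Y // V ∈ F.1}) ≤ κ₂ := by
    intro A₀
    calc #(Σ F : {F : Finset (Set Y) // F ∈ PsiAux.Irred 𝒱 (f '' (A₀ : Set X))},
            {V : Set Y // V ∈ F.1})
        = Cardinal.sum (fun F : {F : Finset (Set Y) //
            F ∈ PsiAux.Irred 𝒱 (f '' (A₀ : Set X))} => #{V : Set Y // V ∈ F.1}) :=
          Cardinal.mk_sigma _
      _ ≤ Cardinal.sum (fun _ : {F : Finset (Set Y) //
            F ∈ PsiAux.Irred 𝒱 (f '' (A₀ : Set X))} => κ₂) :=
          Cardinal.sum_le_sum _ _ (fun F => le_trans Cardinal.mk_le_aleph0 hκ₂)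
      _ = #{F : Finset (Set Y) // F ∈ PsiAux.Irred 𝒱 (f '' (A₀ : Set X))} * κ₂ :=
          Cardinal.sum_const' _ _
      _ ≤ κ₂ * κ₂ := mul_le_mul'
          (PsiAux.mish 𝒱 hκ₂ (fun y hy => (h𝒱 y hy).1) (image_subset_range _ _)) le_rfl
      _ = κ₂ := Cardinal.mul_eq_self hκ₂
  refine ⟨Set.range φ, ?_, ?_, ?_⟩
  · rintro W ⟨i, rfl⟩
    exact TopologicalSpace.GenerateOpen.basic _
      ⟨core i, hAmem i, i.2.2.1, h𝒱open _ (i.2.1.2.1 i.2.2.2), rfl⟩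
  · calc #(Set.range φ) ≤ #I := Cardinal.mk_range_le
      _ = Cardinal.sum (fun A₀ : β =>
            #(Σ F : {F : Finset (Set Y) // F ∈ PsiAux.Irred 𝒱 (f '' (A₀ : Set X))},
              {V : Set Y // V ∈ F.1})) := Cardinal.mk_sigma _
      _ ≤ Cardinal.sum (fun _ : β => κ₂) := Cardinal.sum_le_sum _ _ hinner
      _ = #β * κ₂ := Cardinal.sum_const' _ _
      _ ≤ κ₁ * κ₂ := mul_le_mul' hβcard le_rfl
  · apply Set.eq_singleton_iff_unique_mem.mpr
    constructor
    · rintro W ⟨i, rfl⟩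
      exact hcore_img i
    · intro g hg
      by_contra hne
      have hxne : ∃ x, g x ≠ f x := by
        by_contra h
        push_neg at h
        exact hne (ContinuousMap.ext h)
      have hU : IsOpen {x | g x ≠ f x} :=
        (isClosed_eq g.continuous f.continuous).isOpen_compl
      obtain ⟨z, hzU, hzβ⟩ := hβdense.inter_open_nonempty _ hU hxne
      obtain ⟨A₀, hA₀β, hzA₀⟩ := hzβ
      have hyr : f z ∈ range ⇑f := ⟨z, rfl⟩
      have hy' : g z ∉ ⋂₀ {V ∈ 𝒱 | f z ∈ V} := by
        rw [(h𝒱 (f z) hyr).2]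
        simpa using hzU
      rw [mem_sInter] at hy'
      push_neg at hy'
      obtain ⟨V₁, hV₁mem, hy'V₁⟩ := hy'
      obtain ⟨hV₁𝒱, hyV₁⟩ := hV₁mem
      have hsel : ∀ k : ↥(f '' A₀ \ V₁), ∃ W, W ∈ 𝒱 ∧ (k : Y) ∈ W ∧ f z ∉ W := by
        rintro ⟨k, hk1, hk2⟩
        have hkr : k ∈ range ⇑f := image_subset_range _ _ hk1
        have hky : f z ∉ ({k} : Set Y) := by
          simp only [mem_singleton_iff]
          rintro rfl
          exact hk2 hyV₁
        rw [← (h𝒱 k hkr).2, mem_sInter] at hky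
        push_neg at hky
        obtain ⟨W, ⟨hW𝒱, hkW⟩, hyW⟩ := hky
        exact ⟨W, hW𝒱, hkW, hyW⟩
      choose w hw𝒱 hwmem hwy using hsel
      have hKcpt : IsCompact (f '' A₀ \ V₁) :=
        ((hcpt A₀ (hβα hA₀β)).image f.continuous).diff (h𝒱open V₁ hV₁𝒱)
      obtain ⟨t, ht⟩ := hKcpt.elim_finite_subcover w (fun k => h𝒱open _ (hw𝒱 k))
        (fun k hk => mem_iUnion.mpr ⟨⟨k, hk⟩, hwmem ⟨k, hk⟩⟩)
      set F₀ : Finset (Set Y) := insert V₁ (t.image w) with hF₀def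
      have hF₀𝒱 : ↑F₀ ⊆ 𝒱 := by
        intro W hW
        rcases Finset.mem_insert.mp (Finset.mem_coe.mp hW) with rfl | hW'
        · exact hV₁𝒱
        · obtain ⟨k, _, rfl⟩ := Finset.mem_image.mp hW'
          exact hw𝒱 k
      have hF₀cov : f '' A₀ ⊆ ⋃₀ ↑F₀ := by
        intro c hc
        by_cases hcV : c ∈ V₁
        · exact ⟨V₁, Finset.mem_coe.mpr (Finset.mem_insert_self _ _), hcV⟩
        · obtain ⟨k, hkt, hck⟩ := mem_iUnion₂.mp (ht ⟨hc, hcV⟩)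
          exact ⟨w k, Finset.mem_coe.mpr (Finset.mem_insert.mpr
            (Or.inr (Finset.mem_image.mpr ⟨k, hkt, rfl⟩))), hck⟩
      obtain ⟨F, hFirred, hFsub⟩ := PsiAux.prune 𝒱 (f '' A₀) F₀ hF₀𝒱 hF₀cov
      have hyV : ∀ W ∈ F, f z ∈ W → W = V₁ := by
        intro W hWF hyW
        rcases Finset.mem_insert.mp (hFsub hWF) with h | h
        · exact h
        · obtain ⟨k, _, rfl⟩ := Finset.mem_image.mp h
          exact absurd hyW (hwy k)
      have hyA₀ : f z ∈ f '' A₀ := ⟨z, hzA₀, rfl⟩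
      have hV₁F : V₁ ∈ F := by
        obtain ⟨W, hWF, hyW⟩ := hFirred.2.1 hyA₀
        have hWF' : W ∈ F := Finset.mem_coe.mp hWF
        exact hyV W hWF' hyW ▸ hWF'
      have hyC : f z ∈ f '' A₀ \ ⋃₀ ↑(F.erase V₁) := by
        refine ⟨hyA₀, ?_⟩
        rintro ⟨W, hW, hyW⟩
        have hW' := Finset.mem_coe.mp hW
        exact (Finset.mem_erase.mp hW').1 (hyV W (Finset.mem_of_mem_erase hW') hyW)
      have hgi : g ∈ φ (⟨⟨A₀, hA₀β⟩, ⟨F, hFirred⟩, ⟨V₁, hV₁F⟩⟩ : I) :=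
        hg _ ⟨⟨⟨A₀, hA₀β⟩, ⟨F, hFirred⟩, ⟨V₁, hV₁F⟩⟩, rfl⟩
      exact hy'V₁ (hgi ⟨z, ⟨hzA₀, hyC⟩, rfl⟩)
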